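/- arXiv:2007.06633 — 3 statements merged into one kernel-verified Lean document; each statement's English description precedes it below -/
import Mathlib

section
/- Let N₁, N₂ ∈ ℕ, let M be a real N₂ × N₁ matrix, and let f : [0,1] → ℝ^{N₁} be continuous. Then for every multi-index J = (j_1,…,j_m) with entries in {1,…,N₂}, S^J(M∘f) = Σ_{i_1=1}^{N₁} ⋯ Σ_{i_m=1}^{N₁} S^{(i_1,…,i_m)}(f) · M_{j_1,i_1} M_{j_2,i_2} ⋯ M_{j_m,i_m}, where (M∘f)(t) = M·f(t). (Equivariance of the path signature under Lie group homomorphisms: S(Fγ) = F_* S(γ), where F_* is the induced linear map between Lie algebras acting diagonally on each tensor level.) -/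
open MeasureTheory

/-- The simplex of nondecreasing `m`-tuples with entries in `[0,1]`. -/
def simplex (m : ℕ) : Set (Fin m → ℝ) :=
  {t | (∀ j, t j ∈ Set.Icc (0:ℝ) 1) ∧ ∀ j k : Fin m, j ≤ k → t j ≤ t k}

/-- The signature coefficient of `f : [0,1] → ℝ^N` with respect to a multi-index. -/
noncomputable def sig {N : ℕ} (f : ℝ → Fin N → ℝ) {m : ℕ} (I : Fin m → Fin N) : ℝ :=
  ∫ t in simplex m, ∏ j, f (t j) (I j)

lemma simplex_isClosed (m : ℕ) : IsClosed (simplex m) := by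
  have : simplex m = (⋂ j, (fun t : Fin m → ℝ => t j) ⁻¹' Set.Icc 0 1) ∩
      ⋂ (j : Fin m) (k : Fin m) (_ : j ≤ k), {t : Fin m → ℝ | t j ≤ t k} := by
    ext t; simp [simplex, Set.mem_iInter]
  rw [this]
  exact (isClosed_iInter fun j => isClosed_Icc.preimage (continuous_apply j)).inter
    (isClosed_iInter fun j => isClosed_iInter fun k => isClosed_iInter fun _ =>
      isClosed_le (continuous_apply j) (continuous_apply k))

lemma simplex_isCompact (m : ℕ) : IsCompact (simplex m) := by
  refine (isCompact_Icc (a := (0 : Fin m → ℝ)) (b := 1)).of_isClosed_subset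
    (simplex_isClosed m) ?_
  intro t ht
  simp only [Set.mem_Icc]
  constructor <;> intro j
  · exact (ht.1 j).1
  · exact (ht.1 j).2

lemma contOn_prod {N₁ m : ℕ} (f : ℝ → Fin N₁ → ℝ) (hf : ContinuousOn f (Set.Icc 0 1))
    (i : Fin m → Fin N₁) :
    ContinuousOn (fun t : Fin m → ℝ => ∏ j, f (t j) (i j)) (simplex m) := by
  apply continuousOn_finset_prod
  intro j _
  have h1 : ContinuousOn (fun t : Fin m → ℝ => f (t j)) (simplex m) :=
    hf.comp (continuous_apply j).continuousOn (fun t ht => ht.1 j)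
  exact (continuous_apply (i j)).comp_continuousOn h1

/-- **Equivariance of the path signature under linear maps** (induced by Lie group
homomorphisms): for a matrix `M : ℝ^{N₁} → ℝ^{N₂}` and a multi-index
`J = (j_1,…,j_m)` in `{1,…,N₂}`,
`S^J(M∘f) = Σ_{i_1,…,i_m} S^{(i_1,…,i_m)}(f) · M_{j_1 i_1} ⋯ M_{j_m i_m}`. -/
theorem signature_equivariance (N₁ N₂ : ℕ) (M : Matrix (Fin N₂) (Fin N₁) ℝ)
    (f : ℝ → Fin N₁ → ℝ) (hf : ContinuousOn f (Set.Icc 0 1))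
    (m : ℕ) (J : Fin m → Fin N₂) :
    sig (fun t => M.mulVec (f t)) J =
      ∑ i : Fin m → Fin N₁, sig f i * ∏ p, M (J p) (i p) := by
  have hmeas : MeasurableSet (simplex m) := (simplex_isClosed m).measurableSet
  have key : ∀ t ∈ simplex m,
      (∏ j, M.mulVec (f (t j)) (J j)) =
        ∑ i : Fin m → Fin N₁, (∏ j, f (t j) (i j)) * ∏ p, M (J p) (i p) := by
    intro t _
    have : ∀ j : Fin m, M.mulVec (f (t j)) (J j) = ∑ i, M (J j) i * f (t j) i := by
      intro j; simp [Matrix.mulVec, dotProduct]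
    simp only [this, Finset.prod_univ_sum, Fintype.piFinset_univ]
    congr 1
    ext i
    rw [← Finset.prod_mul_distrib]
    congr 1; ext j; ring
  unfold sig
  rw [setIntegral_congr_fun hmeas key]
  rw [integral_finset_sum]
  · congr 1; ext i
    rw [integral_mul_const]
  · intro i _
    exact ((contOn_prod f hf i).integrableOn_compact (simplex_isCompact m)).mul_const _
end

section
/- Let N ∈ ℕ and let f, g : [0,1] → ℝ^N be continuous. Then for every m ≥ 1, Σ_{I : |I| = m} S^I(f) · S^I(g) = ∫_{Δ^m × Δ^m} ∏_{i=1}^{m} ⟨f(s_i), g(t_i)⟩ ds_1⋯ds_m dt_1⋯dt_m, where the sum is over all multi-indices I of length m with entries in {1,…,N}, ⟨·,·⟩ is the Euclidean inner product on ℝ^N, and Δ^m is the standard m-simplex. Consequently, the truncated signature kernel satisfies K_M(f,g) := Σ_{m=0}^{M} Σ_{|I|=m} S^I(f) S^I(g) = Σ_{m=0}^{M} ∫_{Δ^m × Δ^m} ∏_{i=1}^{m} ⟨f(s_i), g(t_i)⟩ ds dt. -/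
open MeasureTheory

lemma integrableOn_prod_comp {N m : ℕ} (f : ℝ → Fin N → ℝ)
    (hf : ContinuousOn f (Set.Icc 0 1)) (I : Fin m → Fin N) :
    IntegrableOn (fun t : Fin m → ℝ => ∏ j, f (t j) (I j)) (simplex m) := by
  apply ContinuousOn.integrableOn_compact (simplex_isCompact m)
  apply continuousOn_finset_prod
  intro j _
  have hmaps : Set.MapsTo (fun t : Fin m → ℝ => t j) (simplex m) (Set.Icc 0 1) :=
    fun t ht => ht.1 j
  exact (continuous_apply (I j)).comp_continuousOn
    (hf.comp (continuous_apply j).continuousOn hmaps)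

lemma key {N : ℕ} (f g : ℝ → Fin N → ℝ)
    (hf : ContinuousOn f (Set.Icc 0 1)) (hg : ContinuousOn g (Set.Icc 0 1)) (m : ℕ) :
    ∑ I : Fin m → Fin N, sig f I * sig g I =
      ∫ p in (simplex m) ×ˢ (simplex m),
        ∏ i, ∑ c, f (p.1 i) c * g (p.2 i) c := by
  have hvol : (volume : Measure ((Fin m → ℝ) × (Fin m → ℝ))) = volume.prod volume :=
    Measure.volume_eq_prod _ _
  have step1 : ∀ I : Fin m → Fin N, sig f I * sig g I =
      ∫ p in (simplex m) ×ˢ (simplex m),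
        (∏ j, f (p.1 j) (I j)) * ∏ j, g (p.2 j) (I j) := by
    intro I
    rw [sig, sig, hvol]
    exact (setIntegral_prod_mul (fun t : Fin m → ℝ => ∏ j, f (t j) (I j))
      (fun t : Fin m → ℝ => ∏ j, g (t j) (I j)) _ _).symm
  rw [Finset.sum_congr rfl fun I _ => step1 I]
  have hint : ∀ I : Fin m → Fin N,
      IntegrableOn (fun p : (Fin m → ℝ) × (Fin m → ℝ) =>
        (∏ j, f (p.1 j) (I j)) * ∏ j, g (p.2 j) (I j))
        ((simplex m) ×ˢ (simplex m)) := by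
    intro I
    have := (integrableOn_prod_comp f hf I).mul_prod (integrableOn_prod_comp g hg I)
    rw [Measure.prod_restrict] at this
    rwa [IntegrableOn, hvol]
  rw [← integral_finset_sum _ fun I _ => hint I]
  apply setIntegral_congr_fun
  · exact ((simplex_isCompact m).isClosed.measurableSet).prod
      ((simplex_isCompact m).isClosed.measurableSet)
  intro p _
  dsimp only
  rw [Fintype.prod_sum fun i c => f (p.1 i) c * g (p.2 i) c]
  exact Finset.sum_congr rfl fun I _ => Finset.prod_mul_distrib.symm

/-- **Inner-product formula for the signature kernel**: for every `m ≥ 1`,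
`Σ_{|I|=m} S^I(f) S^I(g) = ∫_{Δ^m × Δ^m} ∏_i ⟨f(s_i), g(t_i)⟩ ds dt`, and
consequently the truncated signature kernel satisfies
`K_M(f,g) = Σ_{m=0}^M Σ_{|I|=m} S^I(f) S^I(g)
          = Σ_{m=0}^M ∫_{Δ^m × Δ^m} ∏_i ⟨f(s_i), g(t_i)⟩ ds dt`. -/
theorem signature_kernel_formula (N : ℕ) (f g : ℝ → Fin N → ℝ)
    (hf : ContinuousOn f (Set.Icc 0 1)) (hg : ContinuousOn g (Set.Icc 0 1)) :
    (∀ m : ℕ, 1 ≤ m →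
      ∑ I : Fin m → Fin N, sig f I * sig g I =
        ∫ p in (simplex m) ×ˢ (simplex m),
          ∏ i, ∑ c, f (p.1 i) c * g (p.2 i) c) ∧
    (∀ M : ℕ,
      ∑ m ∈ Finset.range (M + 1), ∑ I : Fin m → Fin N, sig f I * sig g I =
        ∑ m ∈ Finset.range (M + 1),
          ∫ p in (simplex m) ×ˢ (simplex m),
            ∏ i, ∑ c, f (p.1 i) c * g (p.2 i) c) := by
  refine ⟨fun m _ => key f g hf hg m, fun M => ?_⟩
  exact Finset.sum_congr rfl fun m _ => key f g hf hg m
end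

section
/- Let N, M ∈ ℕ with M ≥ 1 and let f, g : [0,1] → ℝ^N be continuous. Define Q_1(s,t) := 1 + ∫_{[0,s]×[0,t]} ⟨f(s'), g(t')⟩ ds' dt' and, recursively for 2 ≤ m ≤ M, Q_m(s,t) := 1 + ∫_{[0,s]×[0,t]} Q_{m-1}(s',t') ⟨f(s'), g(t')⟩ ds' dt'. Then Q_M(1,1) = Σ_{m=0}^{M} ∫_{Δ^m × Δ^m} ∏_{i=1}^{m} ⟨f(s_i), g(t_i)⟩ ds dt = K_M(f,g), the signature kernel truncated at level M. (Horner-type recursion for efficient computation of the signature kernel.) -/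
open MeasureTheory

/-- The Horner-type recursion for the signature kernel:
`Q 0 = 1` and `Q (m+1) (s,t) = 1 + ∫_{[0,s]×[0,t]} Q m (s',t') ⟨f(s'), g(t')⟩ ds' dt'`,
so that `Q 1 (s,t) = 1 + ∫_{[0,s]×[0,t]} ⟨f(s'), g(t')⟩ ds' dt'`. -/
noncomputable def Qker {N : ℕ} (f g : ℝ → Fin N → ℝ) : ℕ → ℝ → ℝ → ℝ
  | 0, _, _ => 1
  | m + 1, s, t =>
      1 + ∫ p in (Set.Icc (0:ℝ) s) ×ˢ (Set.Icc (0:ℝ) t),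
            Qker f g m p.1 p.2 * ∑ c, f p.1 c * g p.2 c

/-! ### Auxiliary development -/

/-- Scaled simplex: nondecreasing `m`-tuples with entries in `[0,s]`. -/
def T (m : ℕ) (s : ℝ) : Set (Fin m → ℝ) :=
  {t | (∀ j, t j ∈ Set.Icc (0:ℝ) s) ∧ ∀ j k : Fin m, j ≤ k → t j ≤ t k}

lemma isClosed_T (m : ℕ) (s : ℝ) : IsClosed (T m s) := by
  have h1 : IsClosed {t : Fin m → ℝ | ∀ j, t j ∈ Set.Icc (0:ℝ) s} := by
    have : {t : Fin m → ℝ | ∀ j, t j ∈ Set.Icc (0:ℝ) s} =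
        ⋂ j, (fun t : Fin m → ℝ => t j) ⁻¹' Set.Icc 0 s := by
      ext t; simp [Set.mem_iInter]
    rw [this]
    exact isClosed_iInter fun j => isClosed_Icc.preimage (continuous_apply j)
  have h2 : IsClosed {t : Fin m → ℝ | ∀ j k : Fin m, j ≤ k → t j ≤ t k} := by
    have : {t : Fin m → ℝ | ∀ j k : Fin m, j ≤ k → t j ≤ t k} =
        ⋂ j, ⋂ k, ⋂ (_ : j ≤ k), {t : Fin m → ℝ | t j ≤ t k} := by
      ext t; simp [Set.mem_iInter]
    rw [this]
    exact isClosed_iInter fun j => isClosed_iInter fun k => isClosed_iInter fun _ =>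
      isClosed_le (continuous_apply j) (continuous_apply k)
  exact h1.inter h2

lemma T_subset_Icc (m : ℕ) (s : ℝ) :
    T m s ⊆ Set.Icc (0 : Fin m → ℝ) (fun _ => max 0 s) := fun t ht =>
  ⟨fun j => (ht.1 j).1, fun j => le_max_of_le_right (ht.1 j).2⟩

lemma isCompact_T (m : ℕ) (s : ℝ) : IsCompact (T m s) :=
  (isCompact_Icc).of_isClosed_subset (isClosed_T m s) (T_subset_Icc m s)

lemma measurableSet_T (m : ℕ) (s : ℝ) : MeasurableSet (T m s) :=
  (isClosed_T m s).measurableSet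

/-- Iterated integral over the scaled simplex. -/
noncomputable def P {m : ℕ} (H : Fin m → ℝ → ℝ) (s : ℝ) : ℝ :=
  ∫ t in T m s, ∏ j, H j (t j)

lemma P_zero (H : Fin 0 → ℝ → ℝ) (s : ℝ) : P H s = 1 := by
  have h1 : T 0 s = Set.univ := by
    ext t; simp [T, Fin.forall_fin_zero_pi]
  simp only [P, h1, Finset.univ_eq_empty, Finset.prod_empty, Measure.restrict_univ]
  rw [integral_const, MeasureTheory.volume_pi, measureReal_def, Measure.pi_univ]; simp

lemma P_slice {k : ℕ} (H : Fin (k+1) → ℝ → ℝ) (hH : ∀ j, Continuous (H j)) (s : ℝ) :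
    P H s = ∫ u in Set.Icc (0:ℝ) s,
      H (Fin.last k) u * P (fun j => H (Fin.castSucc j)) u := by
  classical
  set ψ : ℝ × (Fin k → ℝ) → ℝ :=
    fun p => H (Fin.last k) p.1 * ∏ j, H (Fin.castSucc j) (p.2 j) with hψ
  set S : Set (ℝ × (Fin k → ℝ)) := {p | p.1 ∈ Set.Icc (0:ℝ) s ∧ p.2 ∈ T k p.1} with hS
  have hψc : Continuous ψ := by
    apply Continuous.mul
    · exact (hH _).comp continuous_fst
    · exact continuous_finset_prod _ fun j _ =>
        (hH _).comp ((continuous_apply j).comp continuous_snd)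
  have hScl : IsClosed S := by
    have h1 : IsClosed {p : ℝ × (Fin k → ℝ) | p.1 ∈ Set.Icc (0:ℝ) s} :=
      isClosed_Icc.preimage continuous_fst
    have h2 : IsClosed {p : ℝ × (Fin k → ℝ) | p.2 ∈ T k p.1} := by
      have : {p : ℝ × (Fin k → ℝ) | p.2 ∈ T k p.1} =
          (⋂ j, {p : ℝ × (Fin k → ℝ) | 0 ≤ p.2 j ∧ p.2 j ≤ p.1}) ∩
          (⋂ j, ⋂ l, ⋂ (_ : j ≤ l), {p : ℝ × (Fin k → ℝ) | p.2 j ≤ p.2 l}) := by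
        ext p; simp [T, Set.mem_iInter, forall_and]
      rw [this]
      refine IsClosed.inter (isClosed_iInter fun j => ?_)
        (isClosed_iInter fun j => isClosed_iInter fun l => isClosed_iInter fun _ => ?_)
      · exact (isClosed_le continuous_const ((continuous_apply j).comp continuous_snd)).inter
          (isClosed_le ((continuous_apply j).comp continuous_snd) continuous_fst)
      · exact isClosed_le ((continuous_apply j).comp continuous_snd)
          ((continuous_apply l).comp continuous_snd)
    exact h1.inter h2
  have hScpt : IsCompact S := by
    refine ((isCompact_Icc (a := (0:ℝ)) (b := s)).prod
      (isCompact_Icc (a := (0 : Fin k → ℝ)) (b := fun _ => max 0 s))).of_isClosed_subset hScl ?_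
    intro p hp
    exact ⟨hp.1, ⟨fun j => (hp.2.1 j).1, fun j => le_max_of_le_right (le_trans (hp.2.1 j).2 hp.1.2)⟩⟩
  have hmem : ∀ (u : ℝ) (y : Fin k → ℝ),
      Fin.snoc y u ∈ T (k+1) s ↔ u ∈ Set.Icc (0:ℝ) s ∧ y ∈ T k u := by
    intro u y
    constructor
    · intro ht
      have hu : u ∈ Set.Icc (0:ℝ) s := by
        have := ht.1 (Fin.last k); rwa [Fin.snoc_last] at this
      refine ⟨hu, ⟨fun j => ?_, fun j l hjl => ?_⟩⟩
      · have h1 := ht.1 (Fin.castSucc j)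
        rw [Fin.snoc_castSucc] at h1
        have h2 := ht.2 (Fin.castSucc j) (Fin.last k) (Fin.le_last _)
        rw [Fin.snoc_castSucc, Fin.snoc_last] at h2
        exact ⟨h1.1, h2⟩
      · have := ht.2 (Fin.castSucc j) (Fin.castSucc l) (by simpa using hjl)
        rwa [Fin.snoc_castSucc, Fin.snoc_castSucc] at this
    · rintro ⟨hu, hy⟩
      constructor
      · intro j
        refine Fin.lastCases ?_ (fun j => ?_) j
        · rw [Fin.snoc_last]; exact hu
        · rw [Fin.snoc_castSucc]
          exact ⟨(hy.1 j).1, le_trans (hy.1 j).2 hu.2⟩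
      · intro j l
        refine Fin.lastCases ?_ (fun l' => ?_) l
        · intro _
          rw [Fin.snoc_last]
          refine Fin.lastCases ?_ (fun j' => ?_) j
          · rw [Fin.snoc_last]
          · rw [Fin.snoc_castSucc]; exact (hy.1 j').2
        · refine Fin.lastCases ?_ (fun j' => ?_) j
          · exact fun h => absurd h (not_le.2 (Fin.castSucc_lt_last l'))
          · intro h
            rw [Fin.snoc_castSucc, Fin.snoc_castSucc]
            exact hy.2 j' l' (by simpa using h)
  set e := MeasurableEquiv.piFinSuccAbove (fun _ : Fin (k+1) => ℝ) (Fin.last k) with he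
  have mp : MeasurePreserving e volume volume :=
    volume_preserving_piFinSuccAbove (fun _ : Fin (k+1) => ℝ) (Fin.last k)
  have hesymm : ∀ p : ℝ × (Fin k → ℝ), e.symm p = Fin.snoc p.2 p.1 := by
    intro p
    simp [he, MeasurableEquiv.piFinSuccAbove, Fin.insertNth_last', Fin.snocEquiv]
  have hval : ∀ p : ℝ × (Fin k → ℝ),
      (∏ j, H j ((Fin.snoc p.2 p.1 : Fin (k+1) → ℝ) j)) = ψ p := by
    intro p
    rw [Fin.prod_univ_castSucc]
    simp only [Fin.snoc_castSucc, Fin.snoc_last, hψ]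
    ring
  have hind : ∀ p : ℝ × (Fin k → ℝ),
      (T (k+1) s).indicator (fun t => ∏ j, H j (t j)) (e.symm p) = S.indicator ψ p := by
    intro p
    rw [hesymm p]
    by_cases hp : p ∈ S
    · rw [Set.indicator_of_mem ((hmem p.1 p.2).2 hp), Set.indicator_of_mem hp]
      exact hval p
    · rw [Set.indicator_of_notMem (fun h => hp ((hmem p.1 p.2).1 h)),
        Set.indicator_of_notMem hp]
  have hSint : Integrable (S.indicator ψ) (volume : Measure (ℝ × (Fin k → ℝ))) :=
    (integrable_indicator_iff hScl.measurableSet).2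
      (hψc.continuousOn.integrableOn_compact hScpt)
  have step1 : P H s = ∫ p : ℝ × (Fin k → ℝ), S.indicator ψ p := by
    rw [P, ← integral_indicator (measurableSet_T (k+1) s)]
    rw [← (mp.symm e).integral_comp' ((T (k+1) s).indicator (fun t => ∏ j, H j (t j)))]
    exact integral_congr_ae (Filter.Eventually.of_forall hind)
  rw [step1]
  rw [Measure.volume_eq_prod] at hSint ⊢
  rw [integral_prod _ hSint]
  have inner : ∀ u : ℝ, (∫ y, S.indicator ψ (u, y)) =
      (Set.Icc (0:ℝ) s).indicator
        (fun u => H (Fin.last k) u * P (fun j => H (Fin.castSucc j)) u) u := by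
    intro u
    by_cases hu : u ∈ Set.Icc (0:ℝ) s
    · rw [Set.indicator_of_mem hu]
      have heq : (fun y => S.indicator ψ (u, y)) =
          (T k u).indicator (fun y => ψ (u, y)) := by
        funext y
        by_cases hy : y ∈ T k u
        · rw [Set.indicator_of_mem (show (u,y) ∈ S from ⟨hu, hy⟩), Set.indicator_of_mem hy]
        · rw [Set.indicator_of_notMem (fun h => hy h.2), Set.indicator_of_notMem hy]
      rw [heq, integral_indicator (measurableSet_T k u)]
      simp only [hψ]
      rw [integral_const_mul]
      rfl
    · rw [Set.indicator_of_notMem hu]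
      have heq : (fun y => S.indicator ψ (u, y)) = fun _ => (0:ℝ) := by
        funext y
        exact Set.indicator_of_notMem (fun h => hu h.1) _
      rw [heq, integral_zero]
  rw [show (fun u => ∫ y, S.indicator ψ (u, y)) =
      (Set.Icc (0:ℝ) s).indicator
        (fun u => H (Fin.last k) u * P (fun j => H (Fin.castSucc j)) u) from funext inner]
  exact integral_indicator measurableSet_Icc

lemma P_continuousOn : ∀ {m : ℕ} (H : Fin m → ℝ → ℝ), (∀ j, Continuous (H j)) →
    ContinuousOn (P H) (Set.Icc (0:ℝ) 1) := by
  intro m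
  induction m with
  | zero =>
    intro H _
    have : P H = fun _ => 1 := funext (P_zero H)
    rw [this]; exact continuousOn_const
  | succ m IH =>
    intro H hH
    have hc : ContinuousOn
        (fun u => H (Fin.last m) u * P (fun j => H (Fin.castSucc j)) u) (Set.Icc (0:ℝ) 1) :=
      (hH _).continuousOn.mul (IH _ fun j => hH _)
    have hint : IntegrableOn
        (fun u => H (Fin.last m) u * P (fun j => H (Fin.castSucc j)) u) (Set.Icc (0:ℝ) 1) :=
      hc.integrableOn_Icc
    refine (intervalIntegral.continuousOn_primitive hint).congr fun s hs => ?_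
    rw [P_slice H hH s, integral_Icc_eq_integral_Ioc]

/-- Level-`m` contribution to the signature kernel, in separated form. -/
noncomputable def KK {N : ℕ} (F G : ℝ → Fin N → ℝ) (m : ℕ) (s t : ℝ) : ℝ :=
  ∑ I : Fin m → Fin N, P (fun j u => F u (I j)) s * P (fun j u => G u (I j)) t

lemma KK_zero {N : ℕ} (F G : ℝ → Fin N → ℝ) (s t : ℝ) : KK F G 0 s t = 1 := by
  rw [KK]
  simp [P_zero]

lemma P_snoc {N : ℕ} {F : ℝ → Fin N → ℝ} (hF : ∀ d, Continuous fun u => F u d)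
    {m : ℕ} (I : Fin m → Fin N) (c : Fin N) (s : ℝ) :
    P (fun j u => F u ((Fin.snoc I c : Fin (m+1) → Fin N) j)) s
      = ∫ u in Set.Icc (0:ℝ) s, F u c * P (fun j u => F u (I j)) u := by
  rw [P_slice _ (fun j => hF _) s]
  simp only [Fin.snoc_last, Fin.snoc_castSucc]

lemma KK_rec {N : ℕ} {F G : ℝ → Fin N → ℝ}
    (hF : ∀ d, Continuous fun u => F u d) (hG : ∀ d, Continuous fun u => G u d)
    (m : ℕ) {s t : ℝ} (hs : s ∈ Set.Icc (0:ℝ) 1) (ht : t ∈ Set.Icc (0:ℝ) 1) :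
    (∫ p in (Set.Icc (0:ℝ) s) ×ˢ (Set.Icc (0:ℝ) t),
        KK F G m p.1 p.2 * ∑ c, F p.1 c * G p.2 c) = KK F G (m+1) s t := by
  classical
  have h1 : ∀ (I : Fin m → Fin N) (c : Fin N),
      Integrable (fun u => F u c * P (fun j u => F u (I j)) u)
        (volume.restrict (Set.Icc (0:ℝ) s)) := fun I c =>
    (((hF c).continuousOn.mul (P_continuousOn _ fun j => hF _)).mono
      (Set.Icc_subset_Icc_right hs.2)).integrableOn_Icc
  have h2 : ∀ (I : Fin m → Fin N) (c : Fin N),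
      Integrable (fun u => G u c * P (fun j u => G u (I j)) u)
        (volume.restrict (Set.Icc (0:ℝ) t)) := fun I c =>
    (((hG c).continuousOn.mul (P_continuousOn _ fun j => hG _)).mono
      (Set.Icc_subset_Icc_right ht.2)).integrableOn_Icc
  have hintg : (fun p : ℝ × ℝ => KK F G m p.1 p.2 * ∑ c, F p.1 c * G p.2 c)
      = fun p => ∑ I : Fin m → Fin N, ∑ c : Fin N,
          (F p.1 c * P (fun j u => F u (I j)) p.1)
            * (G p.2 c * P (fun j u => G u (I j)) p.2) := by
    funext p
    rw [KK, Finset.sum_mul]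
    refine Finset.sum_congr rfl fun I _ => ?_
    rw [Finset.mul_sum]
    exact Finset.sum_congr rfl fun c _ => by ring
  rw [hintg, Measure.volume_eq_prod, ← Measure.prod_restrict]
  rw [integral_finset_sum _ fun I _ =>
    integrable_finset_sum _ fun c _ => (h1 I c).mul_prod (h2 I c)]
  have step : ∀ I : Fin m → Fin N,
      (∫ p : ℝ × ℝ, ∑ c, (F p.1 c * P (fun j u => F u (I j)) p.1)
          * (G p.2 c * P (fun j u => G u (I j)) p.2)
        ∂((volume.restrict (Set.Icc (0:ℝ) s)).prod (volume.restrict (Set.Icc (0:ℝ) t))))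
      = ∑ c, P (fun j u => F u ((Fin.snoc I c : Fin (m+1) → Fin N) j)) s
            * P (fun j u => G u ((Fin.snoc I c : Fin (m+1) → Fin N) j)) t := by
    intro I
    rw [integral_finset_sum _ fun c _ => (h1 I c).mul_prod (h2 I c)]
    refine Finset.sum_congr rfl fun c _ => ?_
    rw [integral_prod_mul (fun u => F u c * P (fun j u => F u (I j)) u)
        (fun u => G u c * P (fun j u => G u (I j)) u), P_snoc hF I c s, P_snoc hG I c t]
  rw [Finset.sum_congr rfl fun I _ => step I]
  have reindex : KK F G (m+1) s t = ∑ I : Fin m → Fin N, ∑ c : Fin N,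
      P (fun j u => F u ((Fin.snoc I c : Fin (m+1) → Fin N) j)) s
        * P (fun j u => G u ((Fin.snoc I c : Fin (m+1) → Fin N) j)) t := by
    rw [KK, ← Equiv.sum_comp (Fin.snocEquiv (fun _ : Fin (m+1) => Fin N))
      (fun I' : Fin (m+1) → Fin N =>
        P (fun j u => F u (I' j)) s * P (fun j u => G u (I' j)) t),
      Fintype.sum_prod_type, Finset.sum_comm]
    exact Finset.sum_congr rfl fun I _ => Finset.sum_congr rfl fun c _ => by
      simp [Fin.snocEquiv]
  rw [reindex]

lemma KKmul_integrableOn {N : ℕ} {F G : ℝ → Fin N → ℝ}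
    (hF : ∀ d, Continuous fun u => F u d) (hG : ∀ d, Continuous fun u => G u d)
    (m : ℕ) {s t : ℝ} (hs : s ∈ Set.Icc (0:ℝ) 1) (ht : t ∈ Set.Icc (0:ℝ) 1) :
    IntegrableOn (fun p : ℝ × ℝ => KK F G m p.1 p.2 * ∑ c, F p.1 c * G p.2 c)
      ((Set.Icc (0:ℝ) s) ×ˢ (Set.Icc (0:ℝ) t)) := by
  classical
  have h1 : ∀ (I : Fin m → Fin N) (c : Fin N),
      Integrable (fun u => F u c * P (fun j u => F u (I j)) u)
        (volume.restrict (Set.Icc (0:ℝ) s)) := fun I c =>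
    (((hF c).continuousOn.mul (P_continuousOn _ fun j => hF _)).mono
      (Set.Icc_subset_Icc_right hs.2)).integrableOn_Icc
  have h2 : ∀ (I : Fin m → Fin N) (c : Fin N),
      Integrable (fun u => G u c * P (fun j u => G u (I j)) u)
        (volume.restrict (Set.Icc (0:ℝ) t)) := fun I c =>
    (((hG c).continuousOn.mul (P_continuousOn _ fun j => hG _)).mono
      (Set.Icc_subset_Icc_right ht.2)).integrableOn_Icc
  have hintg : (fun p : ℝ × ℝ => KK F G m p.1 p.2 * ∑ c, F p.1 c * G p.2 c)
      = fun p => ∑ I : Fin m → Fin N, ∑ c : Fin N,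
          (F p.1 c * P (fun j u => F u (I j)) p.1)
            * (G p.2 c * P (fun j u => G u (I j)) p.2) := by
    funext p
    rw [KK, Finset.sum_mul]
    refine Finset.sum_congr rfl fun I _ => ?_
    rw [Finset.mul_sum]
    exact Finset.sum_congr rfl fun c _ => by ring
  rw [hintg, IntegrableOn, Measure.volume_eq_prod, ← Measure.prod_restrict]
  exact integrable_finset_sum _ fun I _ =>
    integrable_finset_sum _ fun c _ => (h1 I c).mul_prod (h2 I c)

lemma Qker_eq_sum {N : ℕ} {f g F G : ℝ → Fin N → ℝ}
    (hfF : Set.EqOn f F (Set.Icc 0 1)) (hgG : Set.EqOn g G (Set.Icc 0 1))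
    (hF : ∀ d, Continuous fun u => F u d) (hG : ∀ d, Continuous fun u => G u d) :
    ∀ m : ℕ, ∀ {s t : ℝ}, s ∈ Set.Icc (0:ℝ) 1 → t ∈ Set.Icc (0:ℝ) 1 →
      Qker f g m s t = ∑ k ∈ Finset.range (m+1), KK F G k s t := by
  intro m
  induction m with
  | zero =>
    intro s t hs ht
    rw [show Qker f g 0 s t = 1 from rfl]
    simp [KK_zero]
  | succ m IH =>
    intro s t hs ht
    rw [show Qker f g (m+1) s t
        = 1 + ∫ p in (Set.Icc (0:ℝ) s) ×ˢ (Set.Icc (0:ℝ) t),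
            Qker f g m p.1 p.2 * ∑ c, f p.1 c * g p.2 c from rfl]
    have hcongr : Set.EqOn
        (fun p : ℝ × ℝ => Qker f g m p.1 p.2 * ∑ c, f p.1 c * g p.2 c)
        (fun p : ℝ × ℝ => ∑ k ∈ Finset.range (m+1),
            KK F G k p.1 p.2 * ∑ c, F p.1 c * G p.2 c)
        ((Set.Icc (0:ℝ) s) ×ˢ (Set.Icc (0:ℝ) t)) := by
      intro p hp
      have hp1 : p.1 ∈ Set.Icc (0:ℝ) 1 := Set.Icc_subset_Icc_right hs.2 hp.1
      have hp2 : p.2 ∈ Set.Icc (0:ℝ) 1 := Set.Icc_subset_Icc_right ht.2 hp.2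
      simp only [IH hp1 hp2, Finset.sum_mul]
      refine Finset.sum_congr rfl fun k _ => ?_
      congr 1
      exact Finset.sum_congr rfl fun c _ => by rw [hfF hp1, hgG hp2]
    rw [setIntegral_congr_fun (measurableSet_Icc.prod measurableSet_Icc) hcongr]
    rw [integral_finset_sum _ fun k _ => KKmul_integrableOn hF hG k hs ht]
    rw [Finset.sum_congr rfl fun k _ => KK_rec hF hG k hs ht]
    rw [Finset.sum_range_succ' (fun k => KK F G k s t) (m+1), KK_zero]
    ring

lemma sig_eq_P {N : ℕ} {f F : ℝ → Fin N → ℝ} (hfF : Set.EqOn f F (Set.Icc 0 1))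
    {m : ℕ} (I : Fin m → Fin N) :
    sig f I = P (fun j u => F u (I j)) 1 := by
  rw [sig, P]
  refine setIntegral_congr_fun (measurableSet_T m 1) fun x hx => ?_
  exact Finset.prod_congr rfl fun j _ => by rw [hfF (hx.1 j)]

lemma integral_simplex_prod_eq {N : ℕ} {f g F G : ℝ → Fin N → ℝ}
    (hfF : Set.EqOn f F (Set.Icc 0 1)) (hgG : Set.EqOn g G (Set.Icc 0 1))
    (hF : ∀ d, Continuous fun u => F u d) (hG : ∀ d, Continuous fun u => G u d) (m : ℕ) :
    (∫ p in (simplex m) ×ˢ (simplex m), ∏ i, ∑ c, f (p.1 i) c * g (p.2 i) c)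
      = KK F G m 1 1 := by
  classical
  have hS : MeasurableSet (simplex m) := measurableSet_T m 1
  have hcongr : Set.EqOn
      (fun p : (Fin m → ℝ) × (Fin m → ℝ) => ∏ i, ∑ c, f (p.1 i) c * g (p.2 i) c)
      (fun p => ∑ I : Fin m → Fin N, (∏ i, F (p.1 i) (I i)) * (∏ i, G (p.2 i) (I i)))
      ((simplex m) ×ˢ (simplex m)) := by
    intro p hp
    calc ∏ i, ∑ c, f (p.1 i) c * g (p.2 i) c
        = ∏ i, ∑ c, F (p.1 i) c * G (p.2 i) c :=
          Finset.prod_congr rfl fun i _ => Finset.sum_congr rfl fun c _ => by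
            rw [hfF (hp.1.1 i), hgG (hp.2.1 i)]
      _ = ∑ I ∈ Fintype.piFinset (fun _ : Fin m => (Finset.univ : Finset (Fin N))),
            ∏ i, F (p.1 i) (I i) * G (p.2 i) (I i) := Finset.prod_univ_sum _ _
      _ = ∑ I : Fin m → Fin N, (∏ i, F (p.1 i) (I i)) * (∏ i, G (p.2 i) (I i)) := by
            rw [Fintype.piFinset_univ]
            exact Finset.sum_congr rfl fun I _ => Finset.prod_mul_distrib
  rw [setIntegral_congr_fun (hS.prod hS) hcongr]
  have hint1 : ∀ I : Fin m → Fin N,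
      Integrable (fun x : Fin m → ℝ => ∏ i, F (x i) (I i))
        (volume.restrict (simplex m)) := fun I =>
    (continuous_finset_prod _ fun i _ =>
      (hF (I i)).comp (continuous_apply i)).continuousOn.integrableOn_compact (isCompact_T m 1)
  have hint2 : ∀ I : Fin m → Fin N,
      Integrable (fun x : Fin m → ℝ => ∏ i, G (x i) (I i))
        (volume.restrict (simplex m)) := fun I =>
    (continuous_finset_prod _ fun i _ =>
      (hG (I i)).comp (continuous_apply i)).continuousOn.integrableOn_compact (isCompact_T m 1)
  rw [Measure.volume_eq_prod, ← Measure.prod_restrict]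
  rw [integral_finset_sum _ fun I _ => (hint1 I).mul_prod (hint2 I)]
  rw [KK]
  refine Finset.sum_congr rfl fun I _ => ?_
  rw [integral_prod_mul (fun x : Fin m → ℝ => ∏ i, F (x i) (I i))
    (fun y : Fin m → ℝ => ∏ i, G (y i) (I i))]
  rfl

/-- **Horner-type recursion computes the truncated signature kernel**:
`Q_M(1,1) = Σ_{m=0}^M ∫_{Δ^m × Δ^m} ∏_i ⟨f(s_i), g(t_i)⟩ ds dt
          = Σ_{m=0}^M Σ_{|I|=m} S^I(f) S^I(g) = K_M(f,g)`. -/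
theorem signature_kernel_horner (N M : ℕ) (hM : 1 ≤ M) (f g : ℝ → Fin N → ℝ)
    (hf : ContinuousOn f (Set.Icc 0 1)) (hg : ContinuousOn g (Set.Icc 0 1)) :
    Qker f g M 1 1 =
      (∑ m ∈ Finset.range (M + 1),
        ∫ p in (simplex m) ×ˢ (simplex m),
          ∏ i, ∑ c, f (p.1 i) c * g (p.2 i) c) ∧
    Qker f g M 1 1 =
      ∑ m ∈ Finset.range (M + 1), ∑ I : Fin m → Fin N, sig f I * sig g I := by
  classical
  set cl : ℝ → ℝ := fun x => max 0 (min x 1) with hcl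
  have hclcont : Continuous cl := continuous_const.max (continuous_id.min continuous_const)
  have hclmem : ∀ x, cl x ∈ Set.Icc (0:ℝ) 1 := fun x =>
    ⟨le_max_left _ _, max_le zero_le_one (min_le_right _ _)⟩
  set F : ℝ → Fin N → ℝ := fun x => f (cl x) with hFdef
  set G : ℝ → Fin N → ℝ := fun x => g (cl x) with hGdef
  have hFc : Continuous F := hf.comp_continuous hclcont hclmem
  have hGc : Continuous G := hg.comp_continuous hclcont hclmem
  have hFd : ∀ d, Continuous fun u => F u d := fun d => (continuous_apply d).comp hFc
  have hGd : ∀ d, Continuous fun u => G u d := fun d => (continuous_apply d).comp hGc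
  have hclid : ∀ x ∈ Set.Icc (0:ℝ) 1, cl x = x := by
    intro x hx
    rw [hcl]
    simp only [min_eq_left hx.2, max_eq_right hx.1]
  have hfF : Set.EqOn f F (Set.Icc 0 1) := fun x hx => by rw [hFdef]; simp [hclid x hx]
  have hgG : Set.EqOn g G (Set.Icc 0 1) := fun x hx => by rw [hGdef]; simp [hclid x hx]
  have h1 : (1:ℝ) ∈ Set.Icc (0:ℝ) 1 := ⟨zero_le_one, le_refl 1⟩
  have hQ := Qker_eq_sum hfF hgG hFd hGd M h1 h1
  constructor
  · rw [hQ]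
    exact Finset.sum_congr rfl fun m _ =>
      (integral_simplex_prod_eq hfF hgG hFd hGd m).symm
  · rw [hQ]
    refine Finset.sum_congr rfl fun m _ => ?_
    rw [KK]
    exact Finset.sum_congr rfl fun I _ => by
      rw [sig_eq_P hfF I, sig_eq_P hgG I]
end
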